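/- Let G be a graph, f : V(G) → {1, 0, 0̂} a colouring, v a fixed vertex, and for each colour i let S_{v=i} denote a minimum f_{v=i}-respecting simultaneous dominating set (where f_{v=i} agrees with f except f_{v=i}(v) = i). Then |S_{v=0}| ≤ |S_{v=0̂}| ≤ |S_{v=1}| and |S_{v=1}| − |S_{v=0}| ≤ 1. -/
import Mathlib


open SimpleGraph

variable {V : Type*}

/-- Number of connected components of a graph. -/
noncomputable def numComponents (G : SimpleGraph V) : ℕ := Nat.card G.ConnectedComponent

/-- A vertex is a cut vertex if its removal increases the number of connected components. -/
def IsCutVertex (G : SimpleGraph V) (v : V) : Prop :=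
  numComponents G < numComponents (G.induce {u | u ≠ v})

/-- `T` is a spanning tree of `G`: a subgraph on all vertices of `G` that is a tree. -/
def IsSpanningTree (G T : SimpleGraph V) : Prop := T ≤ G ∧ T.IsTree

/-- `v` is dominated by `S` in the graph `T`. -/
def DominatedIn (T : SimpleGraph V) (S : Set V) (v : V) : Prop :=
  v ∈ S ∨ ∃ u ∈ S, T.Adj v u

/-- `v` is simultaneously dominated by `S`: dominated in every spanning tree of `G`. -/
def SimDominated (G : SimpleGraph V) (S : Set V) (v : V) : Prop :=
  ∀ T : SimpleGraph V, IsSpanningTree G T → DominatedIn T S v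

/-- `S` is a simultaneous dominating set of `G`. -/
def IsSDSet (G : SimpleGraph V) (S : Set V) : Prop := ∀ v, SimDominated G S v

/-- `C` is a vertex cover of `G`. -/
def IsVertexCover (G : SimpleGraph V) (C : Set V) : Prop :=
  ∀ ⦃u v : V⦄, G.Adj u v → u ∈ C ∨ v ∈ C

/-- A block of `G`: a maximal vertex set inducing a connected subgraph without cut vertices. -/
def IsBlock (G : SimpleGraph V) (B : Set V) : Prop :=
  B.Nonempty ∧ (G.induce B).Connected ∧ (∀ x, ¬ IsCutVertex (G.induce B) x) ∧
    ∀ B' : Set V, B ⊆ B' → (G.induce B').Connected →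
      (∀ x, ¬ IsCutVertex (G.induce B') x) → B' = B

/-- 2-connected: connected, at least 3 vertices, no cut vertex. -/
def TwoConnected (G : SimpleGraph V) [Fintype V] : Prop :=
  G.Connected ∧ 3 ≤ Fintype.card V ∧ ∀ v, ¬ IsCutVertex G v

/-- Colours 1, 0, 0̂. -/
inductive Col : Type
  | one | zero | zhat
deriving DecidableEq

/-- `S` is an `f`-respecting simultaneous dominating set of `G`. -/
def RespSDS (G : SimpleGraph V) (f : V → Col) (S : Set V) : Prop :=
  (∀ v, f v = Col.one → v ∈ S) ∧ ∀ v, f v = Col.zhat → SimDominated G S v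

/-- A minimum `f`-respecting simultaneous dominating set. -/
def MinRespSDS (G : SimpleGraph V) (f : V → Col) (S : Set V) : Prop :=
  RespSDS G f S ∧ ∀ S' : Set V, RespSDS G f S' → S.ncard ≤ S'.ncard

/-- With `S_{v=i}` a minimum `f_{v=i}`-respecting SD-set (where `f_{v=i}` agrees
with `f` except at `v`), we have `|S_{v=0}| ≤ |S_{v=0̂}| ≤ |S_{v=1}|` and
`|S_{v=1}| - |S_{v=0}| ≤ 1`. -/
theorem stmt8 [Fintype V] [DecidableEq V] (G : SimpleGraph V) (f : V → Col) (v : V)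
    (S0 S0h S1 : Set V)
    (h0 : MinRespSDS G (Function.update f v Col.zero) S0)
    (h0h : MinRespSDS G (Function.update f v Col.zhat) S0h)
    (h1 : MinRespSDS G (Function.update f v Col.one) S1) :
    S0.ncard ≤ S0h.ncard ∧ S0h.ncard ≤ S1.ncard ∧ S1.ncard ≤ S0.ncard + 1 := by
  refine ⟨?_, ?_, ?_⟩
  · apply h0.2
    refine ⟨fun u hu => ?_, fun u hu => ?_⟩
    · rcases eq_or_ne u v with rfl | hne
      · simp [Function.update_self] at hu
      · exact h0h.1.1 u (by rwa [Function.update_of_ne hne] at hu ⊢)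
    · rcases eq_or_ne u v with rfl | hne
      · simp [Function.update_self] at hu
      · exact h0h.1.2 u (by rwa [Function.update_of_ne hne] at hu ⊢)
  · apply h0h.2
    refine ⟨fun u hu => ?_, fun u hu => ?_⟩
    · rcases eq_or_ne u v with rfl | hne
      · simp [Function.update_self] at hu
      · exact h1.1.1 u (by rwa [Function.update_of_ne hne] at hu ⊢)
    · rcases eq_or_ne u v with rfl | hne
      · intro T hT
        exact Or.inl (h1.1.1 u (by simp [Function.update_self]))
      · exact h1.1.2 u (by rwa [Function.update_of_ne hne] at hu ⊢)
  · have step : S1.ncard ≤ (S0 ∪ {v}).ncard := by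
      apply h1.2
      refine ⟨fun u hu => ?_, fun u hu => ?_⟩
      · rcases eq_or_ne u v with rfl | hne
        · exact Or.inr rfl
        · exact Or.inl (h0.1.1 u (by rwa [Function.update_of_ne hne] at hu ⊢))
      · rcases eq_or_ne u v with rfl | hne
        · simp [Function.update_self] at hu
        · intro T hT
          rcases h0.1.2 u (by rwa [Function.update_of_ne hne] at hu ⊢) T hT with h | ⟨w, hw, hadj⟩
          · exact Or.inl (Or.inl h)
          · exact Or.inr ⟨w, Or.inl hw, hadj⟩
    calc S1.ncard ≤ (S0 ∪ {v}).ncard := step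
      _ ≤ S0.ncard + ({v} : Set V).ncard := Set.ncard_union_le _ _
      _ = S0.ncard + 1 := by rw [Set.ncard_singleton]
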